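/- arXiv:1204.1587 — 4 statements merged into one kernel-verified Lean document; each statement's English description precedes it below -/
import Mathlib

section
/- Let (e_n)_{n∈ℤ} be an orthonormal basis of a separable infinite-dimensional complex Hilbert space H and let (ω_n)_{n∈ℤ} be a bounded sequence of positive real numbers with lim_{n→+∞} ω_n = 0 and lim_{n→−∞} ω_n = 0. Then the bilateral weighted shift T determined by T e_n = ω_n e_{n+1} (n ∈ ℤ) is strongly irreducible. -/
open Filter Topology

noncomputable section

variable {H : Type*} [NormedAddCommGroup H] [InnerProductSpace ℂ H] [CompleteSpace H]

/-- An operator `T` is strongly irreducible if there is no bounded idempotent `P`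
with `P ≠ 0`, `P ≠ 1` commuting with `T`. -/
def StronglyIrreducible (T : H →L[ℂ] H) : Prop :=
  ¬ ∃ P : H →L[ℂ] H, P * P = P ∧ P ≠ 0 ∧ P ≠ 1 ∧ P * T = T * P

/-- A sequence `f` is a Schauder basis if every vector has a unique norm-convergent
expansion `x = ∑ αₙ • fₙ`. -/
def IsSchauderBasis (f : ℕ → H) : Prop :=
  ∀ x : H, ∃! α : ℕ → ℂ,
    Tendsto (fun k => ∑ n ∈ Finset.range k, α n • f n) atTop (𝓝 x)

/-- A Schauder basis is unconditional if every convergent expansion converges after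
every permutation of its terms. -/
def IsUnconditionalSchauderBasis (f : ℕ → H) : Prop :=
  IsSchauderBasis f ∧
  ∀ (α : ℕ → ℂ) (x : H),
    Tendsto (fun k => ∑ n ∈ Finset.range k, α n • f n) atTop (𝓝 x) →
    ∀ σ : Equiv.Perm ℕ,
      ∃ y, Tendsto (fun k => ∑ n ∈ Finset.range k, α (σ n) • f (σ n)) atTop (𝓝 y)

/-- Two bases are equivalent if exactly the same scalar sequences give convergent series. -/
def BasesEquivalent (f g : ℕ → H) : Prop :=
  ∀ α : ℕ → ℂ,
    (∃ x, Tendsto (fun k => ∑ n ∈ Finset.range k, α n • f n) atTop (𝓝 x)) ↔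
    (∃ x, Tendsto (fun k => ∑ n ∈ Finset.range k, α n • g n) atTop (𝓝 x))

open scoped ComplexInnerProductSpace

set_option linter.unusedSectionVars false
set_option linter.unusedVariables false

lemma aux_onb (e : HilbertBasis ℤ ℂ H) (i j : ℤ) :
    ⟪e i, e j⟫ = if i = j then (1:ℂ) else 0 :=
  orthonormal_iff_ite.mp e.orthonormal i j

lemma aux_inner_T (e : HilbertBasis ℤ ℂ H) (ω : ℤ → ℝ) (T : H →L[ℂ] H)
    (hT : ∀ n : ℤ, T (e n) = (ω n : ℂ) • e (n + 1)) (i : ℤ) (y : H) :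
    ⟪e i, T y⟫ = (ω (i-1) : ℂ) * ⟪e (i-1), y⟫ := by
  have h1 := ((e.hasSum_repr y).mapL T).mapL (innerSL ℂ (e i))
  have h2 : HasSum (fun k : ℤ => e.repr y k * ((ω k : ℂ) * ⟪e i, e (k+1)⟫)) ⟪e i, T y⟫ := by
    refine h1.congr_fun fun k => ?_
    rw [map_smul, hT k, innerSL_apply_apply, inner_smul_right, inner_smul_right]
  have h3 : ∀ k : ℤ, k ≠ i - 1 → e.repr y k * ((ω k : ℂ) * ⟪e i, e (k+1)⟫) = 0 := by
    intro k hk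
    rw [aux_onb, if_neg (by omega)]
    ring
  have h4 := hasSum_single (f := fun k : ℤ => e.repr y k * ((ω k : ℂ) * ⟪e i, e (k+1)⟫)) (i-1) h3
  have h5 := h2.unique h4
  rw [h5]
  show e.repr y (i-1) * ((ω (i-1) : ℂ) * ⟪e i, e ((i-1)+1)⟫) = _
  rw [aux_onb, if_pos (by omega), e.repr_apply_apply]
  ring

lemma aux_expand (e : HilbertBasis ℤ ℂ H) (Q : H →L[ℂ] H) (i : ℤ) (y : H) :
    HasSum (fun k : ℤ => ⟪e k, y⟫ * ⟪e i, Q (e k)⟫) ⟪e i, Q y⟫ := by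
  have h1 := ((e.hasSum_repr y).mapL Q).mapL (innerSL ℂ (e i))
  refine h1.congr_fun fun k => ?_
  rw [map_smul, innerSL_apply_apply, inner_smul_right, e.repr_apply_apply]

lemma aux_rec (e : HilbertBasis ℤ ℂ H) (ω : ℤ → ℝ) (T : H →L[ℂ] H)
    (hT : ∀ n : ℤ, T (e n) = (ω n : ℂ) • e (n + 1))
    (Q : H →L[ℂ] H) (hQT : Q * T = T * Q) (i j : ℤ) :
    (ω j : ℂ) * ⟪e i, Q (e (j+1))⟫ = (ω (i-1) : ℂ) * ⟪e (i-1), Q (e j)⟫ := by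
  have h : Q (T (e j)) = T (Q (e j)) := by
    have := congrArg (fun S : H →L[ℂ] H => S (e j)) hQT
    simpa [ContinuousLinearMap.mul_apply] using this
  have h2 : ⟪e i, Q (T (e j))⟫ = (ω j : ℂ) * ⟪e i, Q (e (j+1))⟫ := by
    rw [hT j, map_smul, inner_smul_right]
  rw [← h2, h, aux_inner_T e ω T hT]

lemma aux_upper (e : HilbertBasis ℤ ℂ H) (ω : ℤ → ℝ)
    (hpos : ∀ n, 0 < ω n) (htop : Tendsto ω atTop (𝓝 0))
    (T : H →L[ℂ] H) (hT : ∀ n : ℤ, T (e n) = (ω n : ℂ) • e (n + 1))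
    (Q : H →L[ℂ] H) (hQT : Q * T = T * Q) (i j : ℤ) (hij : i < j) :
    ⟪e i, Q (e j)⟫ = 0 := by
  set E : ℕ := (j - i).toNat with hE
  have hEj : j = i + E := by simp [hE]; omega
  set G : ℕ → ℝ := fun n => ∏ s ∈ Finset.range E, ω (i + n + s) with hG
  have hGpos : ∀ n, 0 < G n := fun n => Finset.prod_pos fun s _ => hpos _
  -- step identity
  have hstep : ∀ n : ℕ, G (n+1) * ω (i + n) = G n * ω (j + n) := by
    intro n
    have h1 : G n * ω (j + n) = ∏ s ∈ Finset.range (E+1), ω (i + n + s) := by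
      rw [Finset.prod_range_succ, hG]
      congr 2
      omega
    have h2 : G (n+1) * ω (i + n) = ∏ s ∈ Finset.range (E+1), ω (i + n + s) := by
      rw [Finset.prod_range_succ', hG]
      congr 1
      · apply Finset.prod_congr rfl
        intro s _
        congr 1; push_cast; ring
      · congr 1; omega
    rw [h1, h2]
  -- main claim
  have claim : ∀ n : ℕ, (G 0 : ℂ) * ⟪e i, Q (e j)⟫ = (G n : ℂ) * ⟪e (i+n), Q (e (j+n))⟫ := by
    intro n
    induction n with
    | zero => norm_num
    | succ n ih =>
      rw [ih]
      have hrec := aux_rec e ω T hT Q hQT (i + n + 1) (j + n)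
      have hrec' : (ω (j+n) : ℂ) * ⟪e (i + ((n+1:ℕ):ℤ)), Q (e (j + ((n+1:ℕ):ℤ)))⟫
          = (ω (i+n) : ℂ) * ⟪e (i+n), Q (e (j+n))⟫ := by
        have e1 : (i + ((n+1:ℕ):ℤ)) = i + n + 1 := by push_cast; ring
        have e2 : (j + ((n+1:ℕ):ℤ)) = (j + n) + 1 := by push_cast; ring
        have e3 : (i + (n:ℤ) + 1 - 1) = i + (n:ℤ) := by ring
        rw [e1, e2, hrec, e3]
      have hωj : ((ω (j+n) : ℂ)) ≠ 0 := by
        exact_mod_cast ne_of_gt (hpos (j+n))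
      have hstepC : ((G (n+1) : ℝ) : ℂ) * ((ω (i+n) : ℝ) : ℂ) = ((G n : ℝ) : ℂ) * ((ω (j+n) : ℝ) : ℂ) := by
        exact_mod_cast congrArg (fun r : ℝ => (r : ℂ)) (hstep n)
      apply mul_left_cancel₀ hωj
      calc (ω (j+n) : ℂ) * ((G n : ℂ) * ⟪e (i+n), Q (e (j+n))⟫)
          = ((G n : ℂ) * (ω (j+n) : ℂ)) * ⟪e (i+n), Q (e (j+n))⟫ := by ring
        _ = ((G (n+1) : ℂ) * (ω (i+n) : ℂ)) * ⟪e (i+n), Q (e (j+n))⟫ := by rw [hstepC]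
        _ = (G (n+1) : ℂ) * ((ω (i+n) : ℂ) * ⟪e (i+n), Q (e (j+n))⟫) := by ring
        _ = (G (n+1) : ℂ) * ((ω (j+n) : ℂ) * ⟪e (i + ((n+1:ℕ):ℤ)), Q (e (j + ((n+1:ℕ):ℤ)))⟫) := by
            rw [hrec']
        _ = (ω (j+n) : ℂ) * ((G (n+1) : ℂ) * ⟪e (i + ((n+1:ℕ):ℤ)), Q (e (j + ((n+1:ℕ):ℤ)))⟫) := by ring
  -- bound and limit
  have hQbd : ∀ a b : ℤ, ‖⟪e a, Q (e b)⟫‖ ≤ ‖Q‖ := by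
    intro a b
    calc ‖⟪e a, Q (e b)⟫‖ ≤ ‖e a‖ * ‖Q (e b)‖ := norm_inner_le_norm _ _
      _ ≤ 1 * (‖Q‖ * ‖e b‖) := by
          apply mul_le_mul (le_of_eq (e.orthonormal.1 a)) (Q.le_opNorm _) (norm_nonneg _)
          norm_num
      _ = ‖Q‖ := by rw [e.orthonormal.1 b]; ring
  have hbound : ∀ n : ℕ, G 0 * ‖⟪e i, Q (e j)⟫‖ ≤ G n * ‖Q‖ := by
    intro n
    have h := congrArg norm (claim n)
    rw [norm_mul, norm_mul, Complex.norm_real, Complex.norm_real, Real.norm_eq_abs,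
      Real.norm_eq_abs, abs_of_pos (hGpos 0), abs_of_pos (hGpos n)] at h
    rw [h]
    exact mul_le_mul_of_nonneg_left (hQbd _ _) (le_of_lt (hGpos n))
  have hGlim : Tendsto (fun n => G n * ‖Q‖) atTop (𝓝 0) := by
    have hG0 : Tendsto G atTop (𝓝 0) := by
      have h0 : (0:ℝ) = ∏ s ∈ Finset.range E, (0:ℝ) := by
        have hE0 : E ≠ 0 := by rw [hE]; omega
        rw [Finset.prod_const, Finset.card_range, zero_pow hE0]
      rw [hG, h0]
      apply tendsto_finset_prod
      intro s _
      have hcomp : Tendsto (fun n : ℕ => i + (n:ℤ) + (s:ℤ)) atTop atTop := by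
        apply tendsto_atTop_add_const_right
        apply tendsto_atTop_add_const_left
        exact tendsto_natCast_atTop_atTop
      exact htop.comp hcomp
    have := hG0.mul_const ‖Q‖
    simpa using this
  have hle : G 0 * ‖⟪e i, Q (e j)⟫‖ ≤ 0 := ge_of_tendsto' hGlim hbound
  have : ‖⟪e i, Q (e j)⟫‖ = 0 := by
    nlinarith [hGpos 0, norm_nonneg ⟪e i, Q (e j)⟫]
  exact norm_eq_zero.mp this

lemma aux_diag (e : HilbertBasis ℤ ℂ H) (ω : ℤ → ℝ) (hpos : ∀ n, 0 < ω n)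
    (T : H →L[ℂ] H) (hT : ∀ n : ℤ, T (e n) = (ω n : ℂ) • e (n + 1))
    (Q : H →L[ℂ] H) (hQT : Q * T = T * Q) (j : ℤ) :
    ⟪e j, Q (e j)⟫ = ⟪e 0, Q (e 0)⟫ := by
  have hstep : ∀ k : ℤ, ⟪e (k+1), Q (e (k+1))⟫ = ⟪e k, Q (e k)⟫ := by
    intro k
    have h := aux_rec e ω T hT Q hQT (k+1) k
    have h1 : (k + 1 - 1 : ℤ) = k := by ring
    rw [h1] at h
    have hωk : ((ω k : ℂ)) ≠ 0 := by exact_mod_cast ne_of_gt (hpos k)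
    exact mul_left_cancel₀ hωk h
  induction j using Int.induction_on with
  | zero => rfl
  | succ k ih => rw [hstep k, ih]
  | pred k ih =>
      have := hstep (-k - 1)
      have h1 : (-k - 1 + 1 : ℤ) = -k := by ring
      rw [h1] at this
      rw [← ih, ← this]

lemma aux_zero (e : HilbertBasis ℤ ℂ H) (ω : ℤ → ℝ)
    (hpos : ∀ n, 0 < ω n) (htop : Tendsto ω atTop (𝓝 0))
    (T : H →L[ℂ] H) (hT : ∀ n : ℤ, T (e n) = (ω n : ℂ) • e (n + 1))
    (Q : H →L[ℂ] H) (hQT : Q * T = T * Q) (hQQ : Q * Q = Q)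
    (hdiag : ⟪e 0, Q (e 0)⟫ = 0) : Q = 0 := by
  have upper : ∀ i j : ℤ, i < j → ⟪e i, Q (e j)⟫ = 0 :=
    aux_upper e ω hpos htop T hT Q hQT
  have diag0 : ∀ j : ℤ, ⟪e j, Q (e j)⟫ = 0 := fun j =>
    (aux_diag e ω hpos T hT Q hQT j).trans hdiag
  have main : ∀ N : ℕ, ∀ j : ℤ, ⟪e (j + N), Q (e j)⟫ = 0 := by
    intro N
    induction N using Nat.strong_induction_on with
    | _ N ih =>
      intro j
      match N with
      | 0 => simpa using diag0 j
      | (M+1) =>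
        set N := M + 1
        have hQQ' : Q (Q (e j)) = Q (e j) := by
          have := congrArg (fun S : H →L[ℂ] H => S (e j)) hQQ
          simpa [ContinuousLinearMap.mul_apply] using this
        have hexp := aux_expand e Q (j + N) (Q (e j))
        rw [hQQ'] at hexp
        have hfun : (fun k : ℤ => ⟪e k, Q (e j)⟫ * ⟪e (j + N), Q (e k)⟫) = fun _ => (0:ℂ) := by
          funext k
          rcases lt_or_ge k j with hk | hk
          · rw [upper k j hk, zero_mul]
          · have hm : k = j + ((k - j).toNat : ℤ) := by omega
            set m := (k - j).toNat with hmdef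
            rcases lt_trichotomy m N with h1 | h1 | h1
            · rw [hm, ih m h1 j, zero_mul]
            · have hkN : k = j + (N:ℤ) := by omega
              rw [hkN, diag0, mul_zero]
            · have hkN : (j + (N:ℤ)) < k := by omega
              rw [upper _ _ hkN, mul_zero]
        rw [hfun] at hexp
        have := hasSum_zero.unique hexp
        exact this.symm
  have all : ∀ (x : H) (i : ℤ), ⟪e i, Q x⟫ = 0 := by
    intro x i
    have hexp := aux_expand e Q i x
    have hfun : (fun k : ℤ => ⟪e k, x⟫ * ⟪e i, Q (e k)⟫) = fun _ => (0:ℂ) := by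
      funext k
      rcases lt_or_ge i k with hk | hk
      · rw [upper i k hk, mul_zero]
      · have hik : i = k + ((i - k).toNat : ℤ) := by omega
        rw [hik, main _ k, mul_zero]
    rw [hfun] at hexp
    exact (hasSum_zero.unique hexp).symm
  ext x
  show Q x = 0
  apply e.repr.injective
  rw [map_zero]
  apply lp.ext
  funext i
  rw [e.repr_apply_apply]
  simpa using all x i


theorem stmt3_aux (e : HilbertBasis ℤ ℂ H) (ω : ℤ → ℝ)
    (hpos : ∀ n, 0 < ω n) (hbdd : ∃ C : ℝ, ∀ n, ω n ≤ C)
    (htop : Tendsto ω atTop (𝓝 0)) (hbot : Tendsto ω atBot (𝓝 0))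
    (T : H →L[ℂ] H) (hT : ∀ n : ℤ, T (e n) = (ω n : ℂ) • e (n + 1)) :
    ¬ ∃ P : H →L[ℂ] H, P * P = P ∧ P ≠ 0 ∧ P ≠ 1 ∧ P * T = T * P := by
  rintro ⟨P, hPP, hP0, hP1, hPT⟩
  have upper := aux_upper e ω hpos htop T hT P hPT
  have hcc : ⟪e 0, P (e 0)⟫ * ⟪e 0, P (e 0)⟫ = ⟪e 0, P (e 0)⟫ := by
    have hexp := aux_expand e P 0 (P (e 0))
    have hPPe : P (P (e 0)) = P (e 0) := by
      have := congrArg (fun S : H →L[ℂ] H => S (e 0)) hPP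
      simpa [ContinuousLinearMap.mul_apply] using this
    rw [hPPe] at hexp
    have hsingle : ∀ k : ℤ, k ≠ 0 → ⟪e k, P (e 0)⟫ * ⟪e 0, P (e k)⟫ = 0 := by
      intro k hk
      rcases lt_or_gt_of_ne hk with h | h
      · rw [upper k 0 h, zero_mul]
      · rw [upper 0 k h, mul_zero]
    have h4 := hasSum_single (f := fun k : ℤ => ⟪e k, P (e 0)⟫ * ⟪e 0, P (e k)⟫) 0 hsingle
    exact (hexp.unique h4).symm
  have hc01 : ⟪e 0, P (e 0)⟫ = 0 ∨ ⟪e 0, P (e 0)⟫ = 1 := by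
    have h : ⟪e 0, P (e 0)⟫ * (⟪e 0, P (e 0)⟫ - 1) = 0 := by
      linear_combination hcc
    rcases mul_eq_zero.mp h with h | h
    · exact Or.inl h
    · exact Or.inr (by linear_combination h)
  rcases hc01 with h0 | h1
  · exact hP0 (aux_zero e ω hpos htop T hT P hPT hPP h0)
  · have hQT : (1 - P) * T = T * (1 - P) := by
      rw [sub_mul, mul_sub, one_mul, mul_one, hPT]
    have hQQ : (1 - P) * (1 - P) = 1 - P := by
      have h : (1 - P) * (1 - P) = 1 - P - P + P * P := by noncomm_ring
      rw [h, hPP]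
      abel
    have hdiag : ⟪e 0, (1 - P) (e 0)⟫ = 0 := by
      rw [ContinuousLinearMap.sub_apply, ContinuousLinearMap.one_apply, inner_sub_right, h1,
        aux_onb]
      norm_num
    have hz := aux_zero e ω hpos htop T hT (1 - P) hQT hQQ hdiag
    exact hP1 (sub_eq_zero.mp hz).symm

theorem stmt3 (e : HilbertBasis ℤ ℂ H) (ω : ℤ → ℝ)
    (hpos : ∀ n, 0 < ω n) (hbdd : ∃ C : ℝ, ∀ n, ω n ≤ C)
    (htop : Tendsto ω atTop (𝓝 0)) (hbot : Tendsto ω atBot (𝓝 0))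
    (T : H →L[ℂ] H) (hT : ∀ n : ℤ, T (e n) = (ω n : ℂ) • e (n + 1)) :
    StronglyIrreducible T := by
  exact stmt3_aux e ω hpos hbdd htop hbot T hT
end
end

section
/- Let (e_n)_{n∈ℤ} be an orthonormal basis of a separable infinite-dimensional complex Hilbert space H and let (ω_n)_{n∈ℤ} be a bounded sequence of positive real numbers such that sup{ω_n : n ≥ 0} < inf{ω_n : n < 0}. Then the bilateral weighted shift T determined by T e_n = ω_n e_{n+1} (n ∈ ℤ) is strongly irreducible. -/
open Filter Topology

noncomputable section

namespace Stmt4Aux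

/-- Bilateral partial product: `Pz ω n = ∏_{0 ≤ i < n} ω i` for `n ≥ 0`,
and `(∏_{n ≤ i < 0} ω i)⁻¹` for `n < 0`. -/
def Pz (ω : ℤ → ℝ) : ℤ → ℝ
  | Int.ofNat n => ∏ i ∈ Finset.range n, ω i
  | Int.negSucc n => (∏ i ∈ Finset.range (n + 1), ω (-(i + 1)))⁻¹

variable {ω : ℤ → ℝ}

lemma Pz_zero : Pz ω 0 = 1 := by simp [Pz]

lemma Pz_succ (hpos : ∀ n, 0 < ω n) (n : ℤ) : Pz ω (n + 1) = Pz ω n * ω n := by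
  rcases n with m | m
  · show Pz ω (Int.ofNat (m + 1)) = _
    simp [Pz, Finset.prod_range_succ]
  · rcases m with _ | k
    · show Pz ω (Int.ofNat 0) = _
      simp [Pz]
      rw [inv_mul_cancel₀ (hpos _).ne']
    · have h1 : Int.negSucc (k + 1) + 1 = Int.negSucc k := by
        rw [Int.negSucc_eq, Int.negSucc_eq]; push_cast; ring
      rw [h1]
      show (∏ i ∈ Finset.range (k + 1), ω (-(i + 1)))⁻¹ =
        (∏ i ∈ Finset.range (k + 2), ω (-(i + 1)))⁻¹ * ω (Int.negSucc (k + 1))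
      have h3 : (∏ i ∈ Finset.range (k + 2), ω (-(i + 1)))
          = (∏ i ∈ Finset.range (k + 1), ω (-(i + 1))) * ω (Int.negSucc (k + 1)) := by
        rw [Finset.prod_range_succ]
        have h4 : (-((((k + 1) : ℕ) : ℤ) + 1)) = Int.negSucc (k + 1) := by
          rw [Int.negSucc_eq]
        rw [h4]
      rw [h3, mul_inv, mul_assoc, inv_mul_cancel₀ (hpos _).ne', mul_one]

lemma Pz_pos (hpos : ∀ n, 0 < ω n) (n : ℤ) : 0 < Pz ω n := by
  rcases n with m | m
  · exact Finset.prod_pos fun i _ => hpos _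
  · exact inv_pos.2 (Finset.prod_pos fun i _ => hpos _)


open Complex MeasureTheory intervalIntegral in
/-- Orthogonality: `∫_0^{2π} e^{inθ} dθ = 0` for `n ≠ 0`. -/
lemma integral_exp_int (n : ℤ) (hn : n ≠ 0) :
    ∫ θ in (0:ℝ)..(2 * Real.pi), Complex.exp (n * θ * Complex.I) = 0 := by
  have hc : ((n : ℂ) * Complex.I) ≠ 0 := by
    simp [Complex.ext_iff, hn, Complex.I_ne_zero]
  have := integral_exp_mul_complex (a := (0:ℝ)) (b := 2 * Real.pi) hc
  rw [show (fun θ : ℝ => Complex.exp ((n:ℂ) * θ * Complex.I)) =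
      (fun θ : ℝ => Complex.exp (((n:ℂ) * Complex.I) * θ)) from funext fun θ => by ring_nf,
    this]
  have h1 : ((n:ℂ) * Complex.I) * ((2 * Real.pi : ℝ) : ℂ) = n * (2 * Real.pi * Complex.I) := by
    push_cast; ring
  rw [h1, Complex.exp_int_mul_two_pi_mul_I]
  simp


lemma summable_geom_int {C t : ℝ} (ht0 : 0 ≤ t) (ht : t < 1) :
    Summable (fun d : ℤ => C * t ^ d.natAbs) := by
  apply Summable.of_nat_of_neg <;>
    · simp only [Int.natAbs_neg, Int.natAbs_natCast]
      exact (summable_geometric_of_lt_one ht0 ht).mul_left C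


section Fourier

variable {γ : ℤ → ℂ} {C t : ℝ}

open Complex

/-- The Fourier-type series of an absolutely summable sequence. -/
def gfun (γ : ℤ → ℂ) (θ : ℝ) : ℂ := ∑' d : ℤ, γ d * Complex.exp (d * θ * Complex.I)

lemma norm_term (c : ℂ) (n : ℤ) (θ : ℝ) : ‖c * Complex.exp (n * θ * Complex.I)‖ = ‖c‖ := by
  have : ((n : ℂ) * (θ:ℂ) * Complex.I) = ((n * θ : ℝ) : ℂ) * Complex.I := by push_cast; ring
  rw [this, norm_mul, Complex.norm_exp_ofReal_mul_I, mul_one]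

lemma gfun_continuous (hsum : Summable fun d => ‖γ d‖) : Continuous (gfun γ) := by
  apply continuous_tsum (u := fun d => ‖γ d‖) _ hsum
  · intro d θ
    rw [norm_term (γ d) d θ]
  · intro d
    fun_prop

lemma gfun_sq (hsum : Summable fun d => ‖γ d‖)
    (hconv : ∀ d : ℤ, HasSum (fun k => γ k * γ (d - k)) (γ d)) (θ : ℝ) :
    gfun γ θ * gfun γ θ = gfun γ θ := by
  have hs : Summable fun d : ℤ => ‖γ d * Complex.exp (d * θ * Complex.I)‖ := by
    simpa only [fun d : ℤ => norm_term (γ d) d θ] using hsum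
  set f : ℤ → ℂ := fun k => γ k * Complex.exp (k * θ * Complex.I) with hf
  have hmul : Summable fun z : ℤ × ℤ => f z.1 * f z.2 := summable_mul_of_summable_norm hs hs
  rw [show gfun γ θ * gfun γ θ = (∑' k, f k) * (∑' k, f k) from rfl,
    tsum_mul_tsum_of_summable_norm hs hs]
  let e : ℤ × ℤ ≃ ℤ × ℤ :=
    ⟨fun p => (p.2, p.1 - p.2), fun p => (p.1 + p.2, p.1), fun p => by simp, fun p => by simp⟩
  have h1 : ∑' w : ℤ × ℤ, f (e w).1 * f (e w).2 = ∑' z : ℤ × ℤ, f z.1 * f z.2 :=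
    e.tsum_eq (fun z : ℤ × ℤ => f z.1 * f z.2)
  rw [← h1]
  have hmul2 : Summable fun w : ℤ × ℤ => f (e w).1 * f (e w).2 :=
    (Equiv.summable_iff e).mpr hmul
  rw [Summable.tsum_prod hmul2]
  show ∑' (d : ℤ), (∑' k : ℤ, f k * f (d - k)) = ∑' d : ℤ, f d
  congr 1
  funext d
  have hterm : ∀ k : ℤ, f k * f (d - k) = γ k * γ (d - k) * Complex.exp (d * θ * Complex.I) := by
    intro k
    rw [hf]
    simp only
    rw [mul_mul_mul_comm, ← Complex.exp_add]
    congr 2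
    push_cast
    ring
  calc ∑' k : ℤ, f k * f (d - k)
      = ∑' k : ℤ, γ k * γ (d - k) * Complex.exp (d * θ * Complex.I) := by
        exact tsum_congr hterm
    _ = (∑' k : ℤ, γ k * γ (d - k)) * Complex.exp (d * θ * Complex.I) := tsum_mul_right
    _ = f d := by rw [(hconv d).tsum_eq]

lemma gfun_const (hsum : Summable fun d => ‖γ d‖)
    (hconv : ∀ d : ℤ, HasSum (fun k => γ k * γ (d - k)) (γ d)) :
    (∀ θ, gfun γ θ = 0) ∨ (∀ θ, gfun γ θ = 1) := by
  have hval : ∀ θ, gfun γ θ = 0 ∨ gfun γ θ = 1 := by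
    intro θ
    have := gfun_sq hsum hconv θ
    rcases mul_eq_zero.1 (by linear_combination this : gfun γ θ * (gfun γ θ - 1) = 0) with h | h
    · exact Or.inl h
    · exact Or.inr (sub_eq_zero.1 h)
  have hcont := gfun_continuous hsum
  have hA : IsClopen (gfun γ ⁻¹' {0}) := by
    constructor
    · exact isClosed_singleton.preimage hcont
    · have : gfun γ ⁻¹' {0} = (gfun γ ⁻¹' {1})ᶜ := by
        ext θ
        rcases hval θ with h | h <;> simp [h]
      rw [this]
      exact (isClosed_singleton.preimage hcont).isOpen_compl
  rcases isClopen_iff.1 hA with h | h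
  · right
    intro θ
    rcases hval θ with h0 | h1
    · exact absurd (show θ ∈ gfun γ ⁻¹' {0} from h0) (by simp [h])
    · exact h1
  · left
    intro θ
    have : θ ∈ gfun γ ⁻¹' {0} := by rw [h]; trivial
    exact this

set_option maxHeartbeats 1000000 in
open MeasureTheory in
lemma gfun_coeff (hsum : Summable fun d => ‖γ d‖) (d : ℤ) :
    ∫ θ in (0:ℝ)..(2 * Real.pi), gfun γ θ * Complex.exp ((((-d : ℤ)) : ℂ) * (θ:ℂ) * Complex.I)
      = ((2 * Real.pi : ℝ) : ℂ) * γ d := by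
  have h2pi : (0:ℝ) ≤ 2 * Real.pi := by positivity
  set F : ℤ → ℝ → ℂ := fun k θ => γ k * Complex.exp (((k - d : ℤ) : ℂ) * θ * Complex.I) with hF
  have hpoint : ∀ θ : ℝ, gfun γ θ * Complex.exp ((((-d : ℤ)) : ℂ) * (θ:ℂ) * Complex.I) = ∑' k : ℤ, F k θ := by
    intro θ
    rw [gfun, ← tsum_mul_right]
    apply tsum_congr
    intro k
    rw [hF]
    simp only
    rw [mul_assoc, ← Complex.exp_add]
    congr 2
    push_cast
    ring
  have hnorm : ∀ k θ, ‖F k θ‖ = ‖γ k‖ := fun k θ => norm_term (γ k) (k - d) θ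
  have hmeas : ∀ k : ℤ, AEStronglyMeasurable (F k) (volume.restrict (Set.Ioc 0 (2 * Real.pi))) := by
    intro k
    exact (Continuous.aestronglyMeasurable (by fun_prop)).restrict
  have hlint : ∀ k : ℤ, ∫⁻ θ in Set.Ioc 0 (2 * Real.pi), ‖F k θ‖₊ ∂volume
      = ‖γ k‖₊ * ENNReal.ofReal (2 * Real.pi) := by
    intro k
    have : (fun θ : ℝ => (‖F k θ‖₊ : ENNReal)) = fun _ => (‖γ k‖₊ : ENNReal) := by
      funext θ
      have h9 : ‖F k θ‖₊ = ‖γ k‖₊ := NNReal.coe_injective (by simpa [coe_nnnorm] using hnorm k θ)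
      rw [h9]
    rw [this, MeasureTheory.lintegral_const, Measure.restrict_apply_univ, Real.volume_Ioc]
    norm_num
  have hne : (∑' k : ℤ, ∫⁻ θ in Set.Ioc 0 (2 * Real.pi), ‖F k θ‖₊ ∂volume) ≠ ⊤ := by
    simp only [hlint]
    rw [ENNReal.tsum_mul_right]
    apply ENNReal.mul_ne_top _ ENNReal.ofReal_ne_top
    rw [← ENNReal.coe_tsum]
    · exact ENNReal.coe_ne_top
    · exact NNReal.summable_coe.1 (by simpa only [coe_nnnorm] using hsum)
  rw [intervalIntegral.integral_of_le h2pi]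
  calc ∫ θ in Set.Ioc 0 (2 * Real.pi), gfun γ θ * Complex.exp ((((-d : ℤ)) : ℂ) * (θ:ℂ) * Complex.I) ∂volume
      = ∫ θ in Set.Ioc 0 (2 * Real.pi), (∑' k : ℤ, F k θ) ∂volume := by
        congr 1
        funext θ
        exact hpoint θ
    _ = ∑' k : ℤ, ∫ θ in Set.Ioc 0 (2 * Real.pi), F k θ ∂volume :=
        MeasureTheory.integral_tsum hmeas hne
    _ = ((2 * Real.pi : ℝ) : ℂ) * γ d := by
        rw [tsum_eq_single d]
        · have hFd : ∀ θ : ℝ, F d θ = γ d := by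
            intro θ
            rw [hF]
            norm_num
          rw [MeasureTheory.integral_congr_ae (Filter.Eventually.of_forall hFd),
            MeasureTheory.integral_const, measureReal_restrict_apply_univ, measureReal_def, Real.volume_Ioc]
          rw [ENNReal.toReal_ofReal (by linarith [Real.pi_pos] : (0:ℝ) ≤ 2 * Real.pi - 0)]
          rw [sub_zero, real_smul]
        · intro k hk
          rw [hF]
          simp only
          rw [MeasureTheory.integral_const_mul, ← intervalIntegral.integral_of_le h2pi,
            integral_exp_int (k - d) (by omega), mul_zero]

lemma idem_seq (C t : ℝ) (ht0 : 0 ≤ t) (ht : t < 1)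
    (hb : ∀ d : ℤ, ‖γ d‖ ≤ C * t ^ d.natAbs)
    (hconv : ∀ d : ℤ, HasSum (fun k => γ k * γ (d - k)) (γ d)) :
    (∀ d, γ d = 0) ∨ (∀ d : ℤ, γ d = if d = 0 then 1 else 0) := by
  have hsum : Summable fun d => ‖γ d‖ :=
    (summable_geom_int (C := C) ht0 ht).of_nonneg_of_le (fun d => norm_nonneg _) hb
  have h2pi : ((2 * Real.pi : ℝ) : ℂ) ≠ 0 :=
    Complex.ofReal_ne_zero.2 (by positivity)
  rcases gfun_const hsum hconv with h | h
  · left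
    intro d
    have hc := gfun_coeff (γ := γ) hsum d
    rw [intervalIntegral.integral_congr (g := fun _ => (0:ℂ))
      (fun θ _ => by rw [h θ, zero_mul])] at hc
    rw [intervalIntegral.integral_const, smul_zero] at hc
    exact (mul_eq_zero.1 hc.symm).resolve_left h2pi
  · right
    intro d
    have hc := gfun_coeff (γ := γ) hsum d
    rw [intervalIntegral.integral_congr
      (g := fun θ : ℝ => Complex.exp ((((-d : ℤ)) : ℂ) * (θ:ℂ) * Complex.I))
      (fun θ _ => by rw [h θ, one_mul])] at hc
    by_cases hd : d = 0
    · subst hd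
      rw [if_pos rfl]
      have : ∀ θ : ℝ, Complex.exp ((((-(0:ℤ)) : ℤ) : ℂ) * (θ:ℂ) * Complex.I) = 1 := by
        intro θ
        norm_num
      rw [intervalIntegral.integral_congr (g := fun _ => (1:ℂ)) (fun θ _ => this θ)] at hc
      rw [intervalIntegral.integral_const, sub_zero, real_smul, mul_one] at hc
      have : ((2 * Real.pi : ℝ) : ℂ) * γ 0 = ((2 * Real.pi : ℝ) : ℂ) * 1 := by
        rw [mul_one]; exact hc.symm
      exact mul_left_cancel₀ h2pi this
    · rw [if_neg hd]
      rw [integral_exp_int (-d) (by omega)] at hc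
      exact ((mul_eq_zero.1 hc.symm).resolve_left h2pi)

end Fourier

section Hilbert

variable {H : Type*} [NormedAddCommGroup H] [InnerProductSpace ℂ H] [CompleteSpace H]

local notation "⟪" x ", " y "⟫" => @inner ℂ _ _ x y

lemma hasSum_inner_map (e : HilbertBasis ℤ ℂ H) (A : H →L[ℂ] H) (x : H) (m : ℤ) :
    HasSum (fun k : ℤ => ⟪e k, x⟫ * ⟪e m, A (e k)⟫) ⟪e m, A x⟫ := by
  have h := ((e.hasSum_repr x).mapL A).mapL (innerSL ℂ (e m))
  convert h using 1
  · rfl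
  funext k
  simp only [innerSL_apply_apply, map_smul, inner_smul_right, e.repr_apply_apply, smul_eq_mul]
  · rfl

lemma inner_eq_zero_of_all (e : HilbertBasis ℤ ℂ H) {y : H}
    (h : ∀ m : ℤ, ⟪e m, y⟫ = 0) : y = 0 := by
  have h1 := e.hasSum_repr y
  have h2 : (fun k : ℤ => e.repr y k • e k) = fun _ => (0 : H) := by
    funext k
    rw [e.repr_apply_apply, h k, zero_smul]
  rw [h2] at h1
  exact h1.unique hasSum_zero

lemma inner_T_apply (e : HilbertBasis ℤ ℂ H) (ω : ℤ → ℝ) (T : H →L[ℂ] H)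
    (hT : ∀ n : ℤ, T (e n) = ((ω n : ℝ) : ℂ) • e (n + 1)) (x : H) (m : ℤ) :
    ⟪e m, T x⟫ = ((ω (m - 1) : ℝ) : ℂ) * ⟪e (m - 1), x⟫ := by
  have h := hasSum_inner_map e T x m
  have h2 : (fun k : ℤ => ⟪e k, x⟫ * ⟪e m, T (e k)⟫)
      = fun k : ℤ => if k = m - 1 then ((ω (m - 1) : ℝ) : ℂ) * ⟪e (m - 1), x⟫ else 0 := by
    funext k
    rw [hT k, inner_smul_right, orthonormal_iff_ite.mp e.orthonormal]
    by_cases hk : k = m - 1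
    · subst hk
      rw [if_pos rfl, if_pos (by omega)]
      ring
    · rw [if_neg hk, if_neg (by omega)]
      ring
  rw [h2] at h
  exact h.unique (hasSum_ite_eq (m - 1) _)

end Hilbert

lemma const_of_step {α : Type*} (F : ℤ → α) (h : ∀ n : ℤ, F (n + 1) = F n) (a b : ℤ) :
    F a = F b := by
  suffices h2 : ∀ c : ℤ, F c = F 0 by rw [h2 a, h2 b]
  intro c
  induction c using Int.induction_on with
  | zero => rfl
  | succ k ih => rw [h k, ih]
  | pred k ih =>
    have h3 := h (-(k + 1))
    have h4 : (-(k + 1 : ℤ)) + 1 = -k := by ring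
    rw [h4] at h3
    rw [show (-(k:ℤ) - 1) = -((k:ℤ)+1) from by ring, ← h3, ih]

lemma Pz_nat_le {ω : ℤ → ℝ} {S : ℝ} (hpos : ∀ n, 0 < ω n)
    (hS : ∀ n : ℤ, 0 ≤ n → ω n ≤ S) (m : ℕ) : Pz ω (m : ℤ) ≤ S ^ m := by
  show ∏ i ∈ Finset.range m, ω i ≤ S ^ m
  calc ∏ i ∈ Finset.range m, ω (i : ℤ)
      ≤ ∏ _i ∈ Finset.range m, S :=
        Finset.prod_le_prod (fun i _ => (hpos _).le) (fun i _ => hS i (by positivity))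
    _ = S ^ m := by rw [Finset.prod_const, Finset.card_range]

lemma Pz_neg_le {ω : ℤ → ℝ} {I₀ : ℝ} (hpos : ∀ n, 0 < ω n) (hI0 : 0 < I₀)
    (hI : ∀ n : ℤ, n < 0 → I₀ ≤ ω n) (m : ℕ) : Pz ω (-(m : ℤ)) ≤ (I₀ ^ m)⁻¹ := by
  cases m with
  | zero => simp [Pz_zero]
  | succ k =>
    have h1 : (-(((k + 1 : ℕ) : ℤ))) = Int.negSucc k := by rw [Int.negSucc_eq]; push_cast; ring
    rw [h1]
    show (∏ i ∈ Finset.range (k + 1), ω (-(i + 1)))⁻¹ ≤ (I₀ ^ (k + 1))⁻¹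
    have h2 : I₀ ^ (k + 1) ≤ ∏ i ∈ Finset.range (k + 1), ω (-(i + 1)) := by
      calc I₀ ^ (k + 1) = ∏ _i ∈ Finset.range (k + 1), I₀ := by
            rw [Finset.prod_const, Finset.card_range]
        _ ≤ ∏ i ∈ Finset.range (k + 1), ω (-(i + 1)) :=
            Finset.prod_le_prod (fun i _ => hI0.le) (fun i _ => hI _ (by omega))
    exact inv_anti₀ (pow_pos hI0 _) h2

end Stmt4Aux

variable {H : Type*} [NormedAddCommGroup H] [InnerProductSpace ℂ H] [CompleteSpace H]

theorem stmt4 (e : HilbertBasis ℤ ℂ H) (ω : ℤ → ℝ)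
    (hpos : ∀ n, 0 < ω n) (hbdd : ∃ C : ℝ, ∀ n, ω n ≤ C)
    (hgap : sSup (ω '' {n : ℤ | 0 ≤ n}) < sInf (ω '' {n : ℤ | n < 0}))
    (T : H →L[ℂ] H) (hT : ∀ n : ℤ, T (e n) = (ω n : ℂ) • e (n + 1)) :
    StronglyIrreducible T := by
  classical
  rintro ⟨P, hP2, hP0, hP1, hPT⟩
  set S := sSup (ω '' {n : ℤ | 0 ≤ n}) with hSdef
  set I₀ := sInf (ω '' {n : ℤ | n < 0}) with hIdef
  have hbddA : BddAbove (ω '' {n : ℤ | 0 ≤ n}) := by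
    obtain ⟨C, hC⟩ := hbdd
    exact ⟨C, by rintro y ⟨n, -, rfl⟩; exact hC n⟩
  have hSle : ∀ n : ℤ, 0 ≤ n → ω n ≤ S := fun n hn => le_csSup hbddA ⟨n, hn, rfl⟩
  have hS0 : 0 < S := lt_of_lt_of_le (hpos 0) (hSle 0 le_rfl)
  have hbddB : BddBelow (ω '' {n : ℤ | n < 0}) :=
    ⟨0, by rintro y ⟨n, -, rfl⟩; exact (hpos n).le⟩
  have hIle : ∀ n : ℤ, n < 0 → I₀ ≤ ω n := fun n hn => csInf_le hbddB ⟨n, hn, rfl⟩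
  have hSI : S < I₀ := hgap
  obtain ⟨r, hr1, hr2⟩ : ∃ r : ℝ, S < r ∧ r < I₀ :=
    ⟨(S + I₀) / 2, by linarith, by linarith⟩
  have hr0 : 0 < r := lt_trans hS0 hr1
  have hI0pos : 0 < I₀ := lt_trans hS0 hSI
  -- matrix entries
  set p : ℤ → ℤ → ℂ := fun m n => @inner ℂ _ _ (e m) (P (e n)) with hpdef
  have hpbd : ∀ m n : ℤ, ‖p m n‖ ≤ ‖P‖ := by
    intro m n
    calc ‖p m n‖ ≤ ‖e m‖ * ‖P (e n)‖ := norm_inner_le_norm _ _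
      _ = ‖P (e n)‖ := by rw [e.orthonormal.1 m, one_mul]
      _ ≤ ‖P‖ * ‖e n‖ := P.le_opNorm _
      _ = ‖P‖ := by rw [e.orthonormal.1 n, mul_one]
  -- commutation relation
  have hrel : ∀ m n : ℤ, ((ω n : ℝ) : ℂ) * p (m + 1) (n + 1) = ((ω m : ℝ) : ℂ) * p m n := by
    intro m n
    have h1 : @inner ℂ _ _ (e (m + 1)) ((P * T) (e n))
        = @inner ℂ _ _ (e (m + 1)) ((T * P) (e n)) := by rw [hPT]
    have h2 : (P * T) (e n) = P (T (e n)) := rfl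
    have h3 : (T * P) (e n) = T (P (e n)) := rfl
    rw [h2, h3, hT n, map_smul, inner_smul_right,
      Stmt4Aux.inner_T_apply e ω T hT (P (e n)) (m + 1)] at h1
    rw [show (m + 1 - 1 : ℤ) = m from by ring] at h1
    exact h1
  -- partial products
  set Z : ℤ → ℂ := fun n => ((Stmt4Aux.Pz ω n : ℝ) : ℂ) with hZdef
  have hZsucc : ∀ n : ℤ, Z (n + 1) = Z n * ((ω n : ℝ) : ℂ) := by
    intro n
    rw [hZdef]
    simp only [Stmt4Aux.Pz_succ hpos n]
    push_cast
    ring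
  have hZne : ∀ n : ℤ, Z n ≠ 0 :=
    fun n => Complex.ofReal_ne_zero.2 (Stmt4Aux.Pz_pos hpos n).ne'
  have hωne : ∀ n : ℤ, ((ω n : ℝ) : ℂ) ≠ 0 := fun n => Complex.ofReal_ne_zero.2 (hpos n).ne'
  have hZ0 : Z 0 = 1 := by rw [hZdef]; simp [Stmt4Aux.Pz_zero]
  -- diagonal coefficients
  set β : ℤ → ℂ := fun d => p 0 (-d) * Z (-d) with hβdef
  have hdiag : ∀ d n : ℤ, p (n + d) n * Z n = β d * Z (n + d) := by
    intro d n
    have hstep : ∀ k : ℤ, p (k + 1 + d) (k + 1) * Z (k + 1) * (Z (k + 1 + d))⁻¹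
        = p (k + d) k * Z k * (Z (k + d))⁻¹ := by
      intro k
      have h5 := hrel (k + d) k
      rw [show (k + 1 + d : ℤ) = (k + d) + 1 from by ring, hZsucc, hZsucc]
      have h6 := hZne k
      have h7 := hZne (k + d)
      have h8 := hωne k
      have h9 := hωne (k + d)
      field_simp
      linear_combination h5
    have hG := Stmt4Aux.const_of_step
      (fun k : ℤ => p (k + d) k * Z k * (Z (k + d))⁻¹) hstep n (-d)
    rw [show (-d + d : ℤ) = 0 from by ring, hZ0, inv_one, mul_one] at hG
    rw [← div_eq_mul_inv, div_eq_iff (hZne _)] at hG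
    rw [hG, hβdef]
  have hp_d0 : ∀ d : ℤ, p d 0 = β d * Z d := by
    intro d
    have := hdiag d 0
    rwa [zero_add, hZ0, mul_one] at this
  -- convolution identity
  have hβconv : ∀ d : ℤ, HasSum (fun k => β k * β (d - k)) (β d) := by
    intro d
    have h0 := Stmt4Aux.hasSum_inner_map e P (P (e 0)) d
    rw [show P (P (e 0)) = (P * P) (e 0) from rfl, hP2] at h0
    have h1 := h0.mul_right (Z d)⁻¹
    have hfun : (fun k : ℤ => β k * β (d - k))
        = fun k : ℤ => (@inner ℂ _ _ (e k) (P (e 0)) * @inner ℂ _ _ (e d) (P (e k))) * (Z d)⁻¹ := by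
      funext k
      have h2 : p d k * Z k = β (d - k) * Z d := by
        have := hdiag (d - k) k
        rwa [show (k + (d - k) : ℤ) = d from by ring] at this
      have h4 : β (d - k) = p d k * Z k * (Z d)⁻¹ := by
        rw [← div_eq_mul_inv]
        exact (eq_div_iff (hZne d)).2 h2.symm
      show β k * β (d - k) = (p k 0 * p d k) * (Z d)⁻¹
      rw [hp_d0 k, h4]
      ring
    rw [hfun]
    have h5 : @inner ℂ _ _ (e d) (P (e 0)) * (Z d)⁻¹ = β d := by
      show p d 0 * (Z d)⁻¹ = β d
      rw [hp_d0 d, mul_assoc, mul_inv_cancel₀ (hZne d), mul_one]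
    rw [← h5]
    exact h1
  -- bounds
  have hβbd : ∀ d : ℤ, ‖β d‖ ≤ ‖P‖ * Stmt4Aux.Pz ω (-d) := by
    intro d
    rw [hβdef]
    simp only [norm_mul]
    have h1 : ‖Z (-d)‖ = Stmt4Aux.Pz ω (-d) := by
      rw [hZdef]
      simp only [Complex.norm_real, Real.norm_eq_abs]
      exact abs_of_pos (Stmt4Aux.Pz_pos hpos _)
    rw [h1]
    gcongr
    · exact (Stmt4Aux.Pz_pos hpos _).le
    · exact hpbd 0 (-d)
  set t := max (r / I₀) (S / r) with htdef
  have ht0 : 0 ≤ t := (div_nonneg hr0.le hI0pos.le).trans (le_max_left _ _)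
  have ht1 : t < 1 := max_lt ((div_lt_one hI0pos).2 hr2) ((div_lt_one hr0).2 hr1)
  set γ : ℤ → ℂ := fun d => β d * ((r : ℝ) : ℂ) ^ d with hγdef
  have hrCne : ((r : ℝ) : ℂ) ≠ 0 := Complex.ofReal_ne_zero.2 hr0.ne'
  have hγnorm : ∀ d : ℤ, ‖γ d‖ = ‖β d‖ * r ^ d := by
    intro d
    rw [hγdef]
    simp only [norm_mul]
    congr 1
    rw [← Complex.ofReal_zpow]
    simp only [Complex.norm_real, Real.norm_eq_abs]
    exact abs_of_pos (zpow_pos hr0 d)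
  have hγbd : ∀ d : ℤ, ‖γ d‖ ≤ ‖P‖ * t ^ d.natAbs := by
    intro d
    rw [hγnorm d]
    rcases d with m | m
    · simp only [Int.ofNat_eq_coe, Int.natAbs_natCast, zpow_natCast]
      calc ‖β (m : ℤ)‖ * r ^ m ≤ (‖P‖ * Stmt4Aux.Pz ω (-(m : ℤ))) * r ^ m :=
            mul_le_mul_of_nonneg_right (hβbd _) (pow_nonneg hr0.le m)
        _ ≤ (‖P‖ * (I₀ ^ m)⁻¹) * r ^ m :=
            mul_le_mul_of_nonneg_right
              (mul_le_mul_of_nonneg_left (Stmt4Aux.Pz_neg_le hpos hI0pos hIle m)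
                (norm_nonneg _)) (pow_nonneg hr0.le m)
        _ = ‖P‖ * (r / I₀) ^ m := by rw [div_pow]; ring
        _ ≤ ‖P‖ * t ^ m :=
            mul_le_mul_of_nonneg_left
              (pow_le_pow_left₀ (div_nonneg hr0.le hI0pos.le) (le_max_left _ _) m)
              (norm_nonneg _)
    · rw [Int.natAbs_negSucc, zpow_negSucc]
      have hneg : (-(Int.negSucc m) : ℤ) = ((m + 1 : ℕ) : ℤ) := by
        rw [Int.negSucc_eq]; push_cast; ring
      calc ‖β (Int.negSucc m)‖ * (r ^ (m + 1))⁻¹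
          ≤ (‖P‖ * Stmt4Aux.Pz ω (-(Int.negSucc m))) * (r ^ (m + 1))⁻¹ :=
            mul_le_mul_of_nonneg_right (hβbd _) (inv_nonneg.2 (pow_nonneg hr0.le _))
        _ = (‖P‖ * Stmt4Aux.Pz ω ((m + 1 : ℕ) : ℤ)) * (r ^ (m + 1))⁻¹ := by rw [hneg]
        _ ≤ (‖P‖ * S ^ (m + 1)) * (r ^ (m + 1))⁻¹ :=
            mul_le_mul_of_nonneg_right
              (mul_le_mul_of_nonneg_left (Stmt4Aux.Pz_nat_le hpos hSle (m + 1))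
                (norm_nonneg _)) (inv_nonneg.2 (pow_nonneg hr0.le _))
        _ = ‖P‖ * (S / r) ^ (m + 1) := by rw [div_pow]; ring
        _ ≤ ‖P‖ * t ^ (m + 1) :=
            mul_le_mul_of_nonneg_left
              (pow_le_pow_left₀ (div_nonneg hS0.le hr0.le) (le_max_right _ _) (m + 1))
              (norm_nonneg _)
  have hγconv : ∀ d : ℤ, HasSum (fun k => γ k * γ (d - k)) (γ d) := by
    intro d
    have h := (hβconv d).mul_right (((r : ℝ) : ℂ) ^ d)
    have hfun : (fun k : ℤ => γ k * γ (d - k))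
        = fun k : ℤ => β k * β (d - k) * ((r : ℝ) : ℂ) ^ d := by
      funext k
      rw [hγdef]
      simp only
      rw [show (d : ℤ) = k + (d - k) from by ring, zpow_add₀ hrCne]
      ring_nf
    rw [hfun]
    exact h
  -- the dichotomy
  rcases Stmt4Aux.idem_seq ‖P‖ t ht0 ht1 hγbd hγconv with hzero | hone
  · -- γ ≡ 0 : P = 0
    apply hP0
    have hβzero : ∀ d : ℤ, β d = 0 := by
      intro d
      have := hzero d
      rw [hγdef] at this
      simp only at this
      rcases mul_eq_zero.1 this with h | h
      · exact h
      · exact absurd h (zpow_ne_zero d hrCne)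
    have hpzero : ∀ m n : ℤ, p m n = 0 := by
      intro m n
      have := hdiag (m - n) n
      rw [show (n + (m - n) : ℤ) = m from by ring, hβzero, zero_mul] at this
      exact (mul_eq_zero.1 this).resolve_right (hZne n)
    ext x
    show P x = 0
    apply Stmt4Aux.inner_eq_zero_of_all e
    intro m
    have h := Stmt4Aux.hasSum_inner_map e P x m
    have hfun : (fun k : ℤ => @inner ℂ _ _ (e k) x * @inner ℂ _ _ (e m) (P (e k)))
        = fun _ : ℤ => (0 : ℂ) := by
      funext k
      rw [show (@inner ℂ _ _ (e m) (P (e k))) = p m k from rfl, hpzero, mul_zero]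
    rw [hfun] at h
    exact h.unique hasSum_zero
  · -- γ = δ₀ : P = 1
    apply hP1
    have hβone : β 0 = 1 := by
      have := hone 0
      rw [if_pos rfl, hγdef] at this
      simpa using this
    have hβzero : ∀ d : ℤ, d ≠ 0 → β d = 0 := by
      intro d hd
      have := hone d
      rw [if_neg hd, hγdef] at this
      simp only at this
      rcases mul_eq_zero.1 this with h | h
      · exact h
      · exact absurd h (zpow_ne_zero d hrCne)
    have hpd : ∀ m n : ℤ, p m n = if m = n then 1 else 0 := by
      intro m n
      have h := hdiag (m - n) n
      rw [show (n + (m - n) : ℤ) = m from by ring] at h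
      by_cases hmn : m = n
      · subst hmn
        rw [if_pos rfl]
        rw [show (m - m : ℤ) = 0 from by ring, hβone, one_mul] at h
        exact mul_right_cancel₀ (hZne m) (by rw [h, one_mul])
      · rw [if_neg hmn]
        rw [hβzero _ (by omega), zero_mul] at h
        exact (mul_eq_zero.1 h).resolve_right (hZne n)
    ext x
    show P x = x
    have hsub : P x - x = 0 := by
      apply Stmt4Aux.inner_eq_zero_of_all e
      intro m
      rw [inner_sub_right]
      have h := Stmt4Aux.hasSum_inner_map e P x m
      have hfun : (fun k : ℤ => @inner ℂ _ _ (e k) x * @inner ℂ _ _ (e m) (P (e k)))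
          = fun k : ℤ => if k = m then (@inner ℂ _ _ (e m) x : ℂ) else 0 := by
        funext k
        rw [show (@inner ℂ _ _ (e m) (P (e k))) = p m k from rfl, hpd]
        by_cases hk : k = m
        · subst hk
          rw [if_pos rfl, if_pos rfl, mul_one]
        · rw [if_neg (fun hh => hk hh.symm), if_neg hk, mul_zero]
      rw [hfun] at h
      have := h.unique (hasSum_ite_eq m _)
      rw [this, sub_self]
    have := sub_eq_zero.1 hsub
    simpa using this
end
end

section
/- Let (α_n)_{n≥1} be a sequence of positive real numbers with Σ_{n=1}^∞ n·α_n² < ∞ and Σ_{n=1}^∞ α_n = ∞. Then there is no bounded linear operator T on ℓ²(ℕ) whose matrix with respect to the standard orthonormal basis (e_n)_{n≥1} is the lower-triangular Toeplitz matrix with entries α, i.e., no bounded T with ⟨T e_j, e_i⟩ = α_{i−j+1} for all i ≥ j ≥ 1 and ⟨T e_j, e_i⟩ = 0 for i < j. -/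
open Filter Topology

noncomputable section

variable {H : Type*} [NormedAddCommGroup H] [InnerProductSpace ℂ H] [CompleteSpace H]

theorem stmt10 (α : ℕ → ℝ) (hpos : ∀ n, 0 < α n)
    (h1 : Summable fun n : ℕ => ((n : ℝ) + 1) * α n ^ 2)
    (h2 : ¬ Summable α) :
    ¬ ∃ T : lp (fun _ : ℕ => ℂ) 2 →L[ℂ] lp (fun _ : ℕ => ℂ) 2,
      ∀ i j : ℕ,
        (inner ℂ (lp.single 2 i (1 : ℂ)) (T (lp.single 2 j (1 : ℂ))) : ℂ) =
          if j ≤ i then (α (i - j) : ℂ) else 0 := by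
  rintro ⟨T, hT⟩
  have key : ∀ i j : ℕ,
      (inner ℂ (lp.single (E := fun _ : ℕ => ℂ) 2 i (1 : ℂ)) (lp.single 2 j (1 : ℂ)) : ℂ) =
        if i = j then 1 else 0 := by
    intro i j
    rcases eq_or_ne i j with h | h
    · subst h
      rw [lp.inner_single_left, lp.single_apply, Pi.single_eq_same, if_pos rfl]
      simp
    · rw [lp.inner_single_left, lp.single_apply, Pi.single_apply, if_neg h, inner_zero_right]
  set s : ℕ → lp (fun _ : ℕ => ℂ) 2 :=
    fun N => ∑ j ∈ Finset.range N, lp.single 2 j (1 : ℂ) with hs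
  -- ⟪s N, s N⟫ = N
  have hss : ∀ N : ℕ, (inner ℂ (s N) (s N) : ℂ) = N := by
    intro N
    simp only [hs, sum_inner, inner_sum, key]
    simp
    rw [Finset.filter_true_of_mem fun x hx => Finset.mem_range.mp hx, Finset.card_range]
  have hnorm : ∀ N : ℕ, ‖s N‖ ^ 2 = (N : ℝ) := by
    intro N
    have := hss N
    rw [inner_self_eq_norm_sq_to_K] at this
    rw [← Complex.ofReal_inj]
    push_cast at this ⊢
    exact this
  -- expansion of ⟪s N, T (s N)⟫
  have hexp : ∀ N : ℕ, (inner ℂ (s N) (T (s N)) : ℂ) =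
      ∑ i ∈ Finset.range N, ∑ j ∈ Finset.range N,
        (if j ≤ i then (α (i - j) : ℂ) else 0) := by
    intro N
    simp only [hs, map_sum, sum_inner, inner_sum, hT]
    exact Finset.sum_comm
  -- real part
  have hre : ∀ N : ℕ, (inner ℂ (s N) (T (s N)) : ℂ).re =
      ∑ i ∈ Finset.range N, ∑ j ∈ Finset.range N,
        (if j ≤ i then α (i - j) else 0) := by
    intro N
    rw [hexp]
    rw [Complex.re_sum]
    refine Finset.sum_congr rfl fun i _ => ?_
    rw [Complex.re_sum]
    refine Finset.sum_congr rfl fun j _ => ?_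
    split <;> simp
  -- lower bound of the double sum
  have hlow : ∀ M : ℕ, (M : ℝ) * (∑ k ∈ Finset.range M, α k) ≤
      ∑ i ∈ Finset.range (2 * M), ∑ j ∈ Finset.range (2 * M),
        (if j ≤ i then α (i - j) else 0) := by
    intro M
    have hnn : ∀ i j : ℕ, 0 ≤ (if j ≤ i then α (i - j) else 0) := by
      intro i j; split
      · exact (hpos _).le
      · exact le_refl 0
    have h1i : ∀ i ∈ Finset.Ico M (2 * M),
        (∑ k ∈ Finset.range M, α k) ≤
        ∑ j ∈ Finset.range (2 * M), (if j ≤ i then α (i - j) else 0) := by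
      intro i hi
      rw [Finset.mem_Ico] at hi
      have himg : (Finset.range M).image (fun k => i - k) ⊆ Finset.range (2 * M) := by
        intro j hj
        simp only [Finset.mem_image, Finset.mem_range] at hj ⊢
        omega
      calc ∑ k ∈ Finset.range M, α k
          = ∑ j ∈ (Finset.range M).image (fun k => i - k),
              (if j ≤ i then α (i - j) else 0) := by
            rw [Finset.sum_image (by
              intro a ha b hb hab
              simp only [Finset.mem_coe, Finset.mem_range] at ha hb
              have hab' : i - a = i - b := hab
              omega)]
            refine (Finset.sum_congr rfl fun k hk => ?_).symm
            rw [Finset.mem_range] at hk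
            rw [if_pos (by omega)]
            congr 1
            omega
        _ ≤ _ := Finset.sum_le_sum_of_subset_of_nonneg himg (fun j _ _ => hnn i j)
    calc (M : ℝ) * ∑ k ∈ Finset.range M, α k
        = ∑ _i ∈ Finset.Ico M (2 * M), ∑ k ∈ Finset.range M, α k := by
          have h2M : 2 * M - M = M := by omega
          rw [Finset.sum_const, Nat.card_Ico, h2M, nsmul_eq_mul]
      _ ≤ ∑ i ∈ Finset.Ico M (2 * M), ∑ j ∈ Finset.range (2 * M),
            (if j ≤ i then α (i - j) else 0) := Finset.sum_le_sum h1i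
      _ ≤ _ := by
          refine Finset.sum_le_sum_of_subset_of_nonneg ?_ ?_
          · intro i hi
            rw [Finset.mem_Ico] at hi
            rw [Finset.mem_range]
            omega
          · intro i _ _
            exact Finset.sum_nonneg fun j _ => hnn i j
  -- upper bound via boundedness
  have hub : ∀ N : ℕ, (inner ℂ (s N) (T (s N)) : ℂ).re ≤ ‖T‖ * N := by
    intro N
    calc (inner ℂ (s N) (T (s N)) : ℂ).re
        ≤ ‖(inner ℂ (s N) (T (s N)) : ℂ)‖ := Complex.re_le_norm _
      _ ≤ ‖s N‖ * ‖T (s N)‖ := norm_inner_le_norm _ _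
      _ ≤ ‖s N‖ * (‖T‖ * ‖s N‖) := by
          gcongr
          exact T.le_opNorm _
      _ = ‖T‖ * ‖s N‖ ^ 2 := by ring
      _ = ‖T‖ * N := by rw [hnorm]
  -- partial sums bounded
  have hbdd : ∀ M : ℕ, ∑ k ∈ Finset.range M, α k ≤ 2 * ‖T‖ + 1 := by
    intro M
    rcases Nat.eq_zero_or_pos M with h | h
    · subst h
      simp only [Finset.range_zero, Finset.sum_empty]
      positivity
    · have := (hlow M).trans ((hre (2 * M)) ▸ hub (2 * M))
      have hMpos : (0 : ℝ) < M := by exact_mod_cast h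
      have hTnn : (0 : ℝ) ≤ ‖T‖ := norm_nonneg _
      push_cast at this
      nlinarith [this, hMpos]
  exact h2 (summable_of_sum_range_le (fun n => (hpos n).le) hbdd)
end
end

section
/- Let H be a separable infinite-dimensional complex Hilbert space. There exists an operator T ∈ B(H) such that: (1) T is not compact and is strongly irreducible; (2) there exists an orthonormal basis (e_n)_{n≥1} of H such that (T e_n)_{n≥1} is an unconditional Schauder basis of H. -/
open Filter Topology

noncomputable section

variable {H : Type*} [NormedAddCommGroup H] [InnerProductSpace ℂ H] [CompleteSpace H]

section Aux
open Submodule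

local notation "⟪" x ", " y "⟫" => @inner ℂ _ _ x y

lemma orthonormal_norm_sub {ι : Type*} {v : ι → H} (hv : Orthonormal ℂ v) {i j : ι}
    (hij : i ≠ j) : ‖v i - v j‖ = Real.sqrt 2 := by
  have h1 : ‖v i‖ = 1 := hv.1 i
  have h2 : ‖v j‖ = 1 := hv.1 j
  have h0 : ⟪v i, v j⟫ = 0 := hv.2 hij
  have := @norm_sub_sq ℂ H _ _ _ (v i) (v j)
  rw [h0, h1, h2] at this
  simp at this
  rw [show (2:ℝ) = ‖v i - v j‖ ^ 2 by rw [this]; norm_num]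
  rw [Real.sqrt_sq (norm_nonneg _)]

lemma exists_hb [TopologicalSpace.SeparableSpace H] (hinf : ¬ FiniteDimensional ℂ H) :
    Nonempty (HilbertBasis ℕ ℂ H) := by
  obtain ⟨w, b, hb⟩ := exists_hilbertBasis ℂ H
  have horth : Orthonormal ℂ ((↑) : w → H) := hb ▸ b.orthonormal
  have hrange : Set.range ⇑b = w := by rw [hb, Subtype.range_coe]
  -- countable
  have hcount : w.Countable := by
    have hdisj : w.PairwiseDisjoint (fun x => Metric.ball x (1/2)) := by
      intro x hx y hy hxy
      refine Metric.ball_disjoint_ball ?_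
      have : ‖(⟨x, hx⟩ : w).1 - (⟨y, hy⟩ : w).1‖ = Real.sqrt 2 := by
        refine orthonormal_norm_sub horth ?_
        simp [Subtype.ext_iff, hxy]
      rw [dist_eq_norm, this]
      nlinarith [Real.sq_sqrt (by norm_num : (2:ℝ) ≥ 0), Real.sqrt_nonneg 2]
    exact hdisj.countable_of_isOpen (fun i _ => Metric.isOpen_ball)
      (fun i _ => ⟨i, by simp⟩)
  -- infinite
  have hinfw : w.Infinite := by
    intro hfin
    apply hinf
    have : FiniteDimensional ℂ (span ℂ w) := FiniteDimensional.span_of_finite ℂ hfin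
    have hclosed := (span ℂ w).closed_of_finiteDimensional
    have hd := b.dense_span
    rw [hrange] at hd
    rw [hclosed.submodule_topologicalClosure_eq] at hd
    rw [hd] at this
    exact Submodule.topEquiv.finiteDimensional
  haveI : Countable w := hcount.to_subtype
  haveI : Infinite w := hinfw.to_subtype
  obtain ⟨d⟩ := nonempty_denumerable w
  let g : ℕ ≃ w := (Denumerable.eqv w).symm
  refine ⟨HilbertBasis.mk (v := fun n => ((g n : w) : H)) ?_ ?_⟩
  · exact horth.comp g g.injective
  · have : Set.range (fun n => ((g n : w) : H)) = w := by
      ext x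
      constructor
      · rintro ⟨n, rfl⟩; exact (g n).2
      · intro hx; exact ⟨g.symm ⟨x, hx⟩, by simp⟩
    rw [this]
    rw [← hrange]
    rw [b.dense_span]

variable (b : HilbertBasis ℕ ℂ H)

lemma succ_inj' : Function.Injective (fun n : ℕ => n + 1) := fun a c h => by simpa using h

/-- The orthonormal family `n ↦ b (n+1)`. -/
lemma orth_succ : Orthonormal ℂ (fun n : ℕ => b (n + 1)) :=
  b.orthonormal.comp _ succ_inj'

/-- The unilateral shift. -/
def Sop : H →L[ℂ] H :=
  ((orth_succ b).orthogonalFamily.linearIsometry.toContinuousLinearMap).comp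
    (b.repr.toLinearIsometry.toContinuousLinearMap)

lemma Sop_norm (x : H) : ‖Sop b x‖ = ‖x‖ := by
  unfold Sop
  simp only [ContinuousLinearMap.comp_apply, LinearIsometry.coe_toContinuousLinearMap,
    LinearIsometry.norm_map, LinearIsometryEquiv.coe_toLinearIsometry,
    LinearIsometryEquiv.norm_map]

lemma Sop_apply_basis (k : ℕ) : Sop b (b k) = b (k + 1) := by
  classical
  unfold Sop
  simp only [ContinuousLinearMap.comp_apply, LinearIsometry.coe_toContinuousLinearMap,
    LinearIsometryEquiv.coe_toLinearIsometry]
  rw [b.repr_self]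
  rw [(orth_succ b).orthogonalFamily.linearIsometry_apply_single]
  simp [LinearIsometry.toSpanSingleton_apply]

lemma Sop_pow_apply_basis (k n : ℕ) : ((Sop b) ^ k) (b n) = b (n + k) := by
  induction k with
  | zero => simp
  | succ k ih =>
    rw [pow_succ', ContinuousLinearMap.mul_apply, ih, Sop_apply_basis, Nat.add_assoc]

lemma inner_Sop_pow (y : H) (m k : ℕ) :
    ⟪b m, ((Sop b) ^ k) y⟫ = if k ≤ m then b.repr y (m - k) else 0 := by
  classical
  have h1 : HasSum (fun j => b.repr y j • b (j + k)) (((Sop b) ^ k) y) := by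
    have := ((Sop b) ^ k).hasSum (b.hasSum_repr y)
    simpa only [map_smul, Sop_pow_apply_basis] using this
  have h2 : HasSum (fun j => b.repr y j * ⟪b m, b (j + k)⟫) ⟪b m, ((Sop b) ^ k) y⟫ := by
    have := (innerSL ℂ (b m)).hasSum h1
    simpa only [innerSL_apply_apply, inner_smul_right] using this
  have horth := orthonormal_iff_ite.mp b.orthonormal
  by_cases hkm : k ≤ m
  · rw [if_pos hkm]
    refine h2.unique ?_
    have : (fun j => b.repr y j * ⟪b m, b (j + k)⟫) =
        fun j => if j = m - k then b.repr y (m - k) else 0 := by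
      funext j
      rw [horth m (j + k)]
      by_cases hj : j = m - k
      · subst hj
        rw [if_pos (by omega), if_pos rfl, mul_one]
      · rw [if_neg (by omega), if_neg hj, mul_zero]
    rw [this]
    exact hasSum_ite_eq (m - k) _
  · rw [if_neg hkm]
    refine h2.unique ?_
    have : (fun j => b.repr y j * ⟪b m, b (j + k)⟫) = fun _ => (0 : ℂ) := by
      funext j
      rw [horth m (j + k), if_neg (by omega), mul_zero]
    rw [this]
    exact hasSum_zero

lemma coeff_unique (β : ℕ → ℂ) (y : H)
    (h : Tendsto (fun k => ∑ n ∈ Finset.range k, β n • b n) atTop (𝓝 y)) (m : ℕ) :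
    β m = b.repr y m := by
  classical
  have hc : Tendsto (fun k => ⟪b m, ∑ n ∈ Finset.range k, β n • b n⟫) atTop (𝓝 ⟪b m, y⟫) :=
    ((innerSL ℂ (b m)).continuous.tendsto y).comp h
  have horth := orthonormal_iff_ite.mp b.orthonormal
  have heq : ∀ᶠ k in atTop, ⟪b m, ∑ n ∈ Finset.range k, β n • b n⟫ = β m := by
    filter_upwards [eventually_ge_atTop (m + 1)] with k hk
    rw [inner_sum]
    have : ∀ n ∈ Finset.range k, ⟪b m, β n • b n⟫ = if n = m then β m else 0 := by
      intro n _
      rw [inner_smul_right, horth m n]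
      by_cases hnm : n = m
      · subst hnm; simp
      · rw [if_neg (Ne.symm hnm), if_neg hnm, mul_zero]
    rw [Finset.sum_congr rfl this, Finset.sum_ite_eq' (Finset.range k) m]
    rw [if_pos (Finset.mem_range.mpr (by omega))]
  have : Tendsto (fun _ : ℕ => β m) atTop (𝓝 ⟪b m, y⟫) := hc.congr' heq
  have := tendsto_nhds_unique this tendsto_const_nhds
  rw [b.repr_apply_apply, this]

/-- The operator `T = 2 + S`. -/
def Tb : H →L[ℂ] H := (2 : ℂ) • (1 : H →L[ℂ] H) + Sop b

lemma Top_apply (x : H) : Tb b x = (2 : ℂ) • x + Sop b x := rfl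

lemma Sop_opNorm : ‖Sop b‖ ≤ 1 :=
  ContinuousLinearMap.opNorm_le_bound _ zero_le_one (fun x => by rw [Sop_norm, one_mul])

lemma Tb_norm_lower (x : H) : ‖x‖ ≤ ‖Tb b x‖ := by
  have h1 : ‖(2 : ℂ) • x‖ = 2 * ‖x‖ := by
    rw [norm_smul]; simp
  have := norm_add_le (Tb b x) (-(Sop b x))
  have h2 : Tb b x + -(Sop b x) = (2 : ℂ) • x := by rw [Top_apply]; abel
  rw [h2, h1, norm_neg, Sop_norm] at this
  linarith

lemma Tb_unit : ∃ T' : H →L[ℂ] H, Tb b * T' = 1 ∧ T' * Tb b = 1 := by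
  have hnorm : ‖-((2⁻¹ : ℂ) • Sop b)‖ < 1 := by
    rw [norm_neg, norm_smul]
    have := Sop_opNorm b
    have h2 : ‖(2⁻¹ : ℂ)‖ = 2⁻¹ := by simp
    rw [h2]
    nlinarith [ContinuousLinearMap.opNorm_nonneg (Sop b)]
  set u := Units.oneSub (-((2⁻¹ : ℂ) • Sop b)) hnorm with hu
  have huv : (u : H →L[ℂ] H) = 1 + (2⁻¹ : ℂ) • Sop b := by
    rw [hu, Units.val_oneSub, sub_neg_eq_add]
  have hT : Tb b = (2 : ℂ) • (u : H →L[ℂ] H) := by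
    rw [huv, smul_add, smul_smul]
    norm_num
    rfl
  refine ⟨(2⁻¹ : ℂ) • (↑u⁻¹ : H →L[ℂ] H), ?_, ?_⟩
  · rw [hT, smul_mul_assoc, mul_smul_comm, smul_smul, u.mul_inv]
    norm_num
  · rw [hT, smul_mul_assoc, mul_smul_comm, smul_smul, u.inv_mul]
    norm_num

lemma clm_ext_basis {f g : H →L[ℂ] H} (h : ∀ n, f (b n) = g (b n)) : f = g := by
  have hdense : Dense (span ℂ (Set.range ⇑b) : Set H) := by
    have := b.dense_span
    rwa [← Submodule.dense_iff_topologicalClosure_eq_top] at this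
  have heq : Set.EqOn ⇑f ⇑g (span ℂ (Set.range ⇑b) : Set H) := by
    intro y hy
    induction hy using Submodule.span_induction with
    | mem z hz => obtain ⟨n, rfl⟩ := hz; exact h n
    | zero => simp
    | add u v _ _ hu hv => simp [map_add, hu, hv]
    | smul c u _ hu => simp [map_smul, hu]
  have := Continuous.ext_on hdense f.continuous g.continuous heq
  exact ContinuousLinearMap.ext fun x => congrFun this x

lemma comm_shift {P : H →L[ℂ] H} (hc : P * Sop b = Sop b * P) (n : ℕ) :
    P (b n) = ((Sop b) ^ n) (P (b 0)) := by
  have hpow : ∀ k, P * (Sop b) ^ k = (Sop b) ^ k * P := by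
    intro k; induction k with
    | zero => simp
    | succ k ih => rw [pow_succ, ← mul_assoc, ih, mul_assoc, hc, ← mul_assoc]
  have h0 : ((Sop b) ^ n) (b 0) = b n := by rw [Sop_pow_apply_basis, Nat.zero_add]
  calc P (b n) = P (((Sop b) ^ n) (b 0)) := by rw [h0]
    _ = (P * (Sop b) ^ n) (b 0) := rfl
    _ = ((Sop b) ^ n * P) (b 0) := by rw [hpow]
    _ = ((Sop b) ^ n) (P (b 0)) := rfl

lemma Tb_strongly_irreducible :
    ¬ ∃ P : H →L[ℂ] H, P * P = P ∧ P ≠ 0 ∧ P ≠ 1 ∧ P * Tb b = Tb b * P := by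
  rintro ⟨P, hPP, hP0, hP1, hcomm⟩
  have hc : P * Sop b = Sop b * P := by
    unfold Tb at hcomm
    rw [mul_add, add_mul] at hcomm
    have h2 : P * ((2:ℂ) • 1) = ((2:ℂ) • 1) * P := by
      rw [mul_smul_comm, smul_mul_assoc, mul_one, one_mul]
    rw [h2] at hcomm
    exact add_left_cancel hcomm
  set a : ℕ → ℂ := fun j => b.repr (P (b 0)) j with ha
  have hconv : ∀ m, a m = ∑ k ∈ Finset.range (m+1), a k * a (m - k) := by
    intro m
    have hPb0 : P (P (b 0)) = P (b 0) := by
      have := congrArg (fun f : H →L[ℂ] H => f (b 0)) hPP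
      simpa using this
    have h1 : HasSum (fun j => a j • b j) (P (b 0)) := b.hasSum_repr _
    have h2 : HasSum (fun j => a j * ⟪b m, P (b j)⟫) ⟪b m, P (P (b 0))⟫ := by
      have := ((innerSL ℂ (b m)).comp P).hasSum h1
      simpa [inner_smul_right] using this
    have h3 : (fun j => a j * ⟪b m, P (b j)⟫)
        = fun j => if j ≤ m then a j * a (m - j) else 0 := by
      funext j
      rw [comm_shift b hc j, inner_Sop_pow]
      by_cases hj : j ≤ m
      · rw [if_pos hj, if_pos hj]
      · rw [if_neg hj, if_neg hj, mul_zero]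
    rw [h3] at h2
    have h4 : a m = ⟪b m, P (P (b 0))⟫ := by
      rw [hPb0, ha]; exact b.repr_apply_apply _ _
    rw [h4, ← h2.tsum_eq, tsum_eq_sum (s := Finset.range (m+1))
      (fun j hj => if_neg (fun hjm => hj (Finset.mem_range.mpr (by omega))))]
    refine Finset.sum_congr rfl (fun k hk => ?_)
    rw [if_pos (Nat.lt_succ_iff.mp (Finset.mem_range.mp hk))]
  -- power series argument
  set F : PowerSeries ℂ := PowerSeries.mk a with hF
  have hFF : F * F = F := by
    ext m
    rw [PowerSeries.coeff_mul]
    simp only [hF, PowerSeries.coeff_mk]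
    rw [Finset.Nat.sum_antidiagonal_eq_sum_range_succ (f := fun i j => a i * a j)]
    exact (hconv m).symm
  have hF01 : F = 0 ∨ F = 1 := by
    have h : F * (F - 1) = 0 := by rw [mul_sub, mul_one, hFF, sub_self]
    rcases mul_eq_zero.mp h with h | h
    · exact Or.inl h
    · exact Or.inr (sub_eq_zero.mp h)
  rcases hF01 with hF0 | hF1
  · apply hP0
    have ha0 : ∀ j, a j = 0 := by
      intro j
      have := congrArg (PowerSeries.coeff j) hF0
      simpa [hF] using this
    have hPb0 : P (b 0) = 0 := by
      apply b.repr.injective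
      rw [map_zero b.repr]
      ext j
      exact ha0 j
    refine clm_ext_basis b (fun n => ?_)
    rw [comm_shift b hc n, hPb0, map_zero, ContinuousLinearMap.zero_apply]
  · apply hP1
    have ha1 : ∀ j, a j = if j = 0 then 1 else 0 := by
      intro j
      have := congrArg (PowerSeries.coeff j) hF1
      simpa [hF, PowerSeries.coeff_one] using this
    have hPb0 : P (b 0) = b 0 := by
      classical
      apply b.repr.injective
      rw [b.repr_self]
      ext j
      rw [lp.single_apply, Pi.single_apply]
      simpa using ha1 j
    refine clm_ext_basis b (fun n => ?_)
    rw [comm_shift b hc n, hPb0, Sop_pow_apply_basis, Nat.zero_add,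
      ContinuousLinearMap.one_apply]

lemma Tb_not_compact : ¬ IsCompactOperator ⇑(Tb b) := by
  intro hcpt
  obtain ⟨K, hKc, hK⟩ := hcpt
  obtain ⟨ε, hε, hball⟩ := Metric.mem_nhds_iff.mp hK
  set u : ℕ → H := fun n => Tb b ((ε/2 : ℝ) • b n) with hu
  have hmem : ∀ n, u n ∈ K := by
    intro n
    refine hball ?_
    rw [Metric.mem_ball, dist_zero_right, norm_smul, b.orthonormal.1 n]
    simp only [Real.norm_eq_abs, mul_one]
    rw [abs_of_pos (by linarith)]
    linarith
  obtain ⟨x, -, φ, hφ, hconv⟩ := hKc.tendsto_subseq hmem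
  have hcauchy := hconv.cauchySeq
  rw [Metric.cauchySeq_iff] at hcauchy
  obtain ⟨N, hN⟩ := hcauchy (ε/2) (by linarith)
  have hsep : dist (u (φ N)) (u (φ (N+1))) ≥ ε/2 := by
    have hne : φ N ≠ φ (N+1) := (hφ (Nat.lt_succ_self N)).ne
    have h1 : u (φ N) - u (φ (N+1)) = Tb b ((ε/2 : ℝ) • (b (φ N) - b (φ (N+1)))) := by
      rw [hu]
      simp only [smul_sub, map_sub]
    have h2 : ‖(ε/2 : ℝ) • (b (φ N) - b (φ (N+1)))‖ = (ε/2) * Real.sqrt 2 := by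
      rw [norm_smul, orthonormal_norm_sub b.orthonormal hne]
      simp only [Real.norm_eq_abs]
      rw [abs_of_pos (by linarith)]
    have h3 := Tb_norm_lower b ((ε/2 : ℝ) • (b (φ N) - b (φ (N+1))))
    rw [dist_eq_norm, h1]
    rw [h2] at h3
    nlinarith [Real.sq_sqrt (by norm_num : (2:ℝ) ≥ 0), Real.sqrt_nonneg 2,
      Real.sqrt_le_sqrt (by norm_num : (1:ℝ) ≤ 2), Real.sqrt_one]
  have := hN ((fun k => φ k) N |> fun _ => N)
  have hlt := hN N le_rfl (N+1) (Nat.le_succ N)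
  simp only [Function.comp_apply] at hlt
  exact absurd hlt (not_lt.mpr hsep)


lemma Tb_partial_sums {β : ℕ → ℂ} {x : H} {T' : H →L[ℂ] H}
    (hT'Tx : ∀ y, T' (Tb b y) = y)
    (hβ : Tendsto (fun k => ∑ n ∈ Finset.range k, β n • Tb b (b n)) atTop (𝓝 x)) :
    Tendsto (fun k => ∑ n ∈ Finset.range k, β n • b n) atTop (𝓝 (T' x)) := by
  have h := (T'.continuous.tendsto x).comp hβ
  refine h.congr (fun k => ?_)
  simp only [Function.comp_apply, map_sum, map_smul, hT'Tx]

lemma Tb_schauder : IsSchauderBasis (fun n => Tb b (b n)) ∧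
    ∀ (α : ℕ → ℂ) (x : H),
      Tendsto (fun k => ∑ n ∈ Finset.range k, α n • Tb b (b n)) atTop (𝓝 x) →
      ∀ σ : Equiv.Perm ℕ,
        ∃ y, Tendsto (fun k => ∑ n ∈ Finset.range k, α (σ n) • Tb b (b (σ n))) atTop (𝓝 y) := by
  obtain ⟨T', hTT', hT'T⟩ := Tb_unit b
  have hTT'x : ∀ x, Tb b (T' x) = x := fun x => by
    have := congrArg (fun f : H →L[ℂ] H => f x) hTT'; simpa using this
  have hT'Tx : ∀ x, T' (Tb b x) = x := fun x => by
    have := congrArg (fun f : H →L[ℂ] H => f x) hT'T; simpa using this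
  constructor
  · intro x
    refine ⟨fun n => b.repr (T' x) n, ?_, ?_⟩
    · have h1 : HasSum (fun n => b.repr (T' x) n • b n) (T' x) := b.hasSum_repr _
      have h2 := (Tb b).hasSum h1
      simp only [map_smul] at h2
      rw [hTT'x] at h2
      exact h2.tendsto_sum_nat
    · intro β hβ
      have h3 := Tb_partial_sums b hT'Tx hβ
      funext m
      exact coeff_unique b β (T' x) h3 m
  · intro α x hx σ
    have h3 := Tb_partial_sums b hT'Tx hx
    have hα : ∀ m, α m = b.repr (T' x) m := coeff_unique b α (T' x) h3
    have h1 : HasSum (fun n => α n • b n) (T' x) := by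
      have heq : (fun n => α n • b n) = fun n => b.repr (T' x) n • b n :=
        funext fun n => by rw [hα n]
      rw [heq]
      exact b.hasSum_repr _
    have h2 : HasSum ((fun n => α n • b n) ∘ σ) (T' x) :=
      (Equiv.hasSum_iff (f := fun n => α n • b n) (a := T' x) σ).mpr h1
    rw [show (fun n => α n • b n) ∘ ⇑σ = fun n => α (σ n) • b (σ n) from rfl] at h2
    have h4 := (Tb b).hasSum h2
    simp only [map_smul] at h4
    rw [hTT'x] at h4
    exact ⟨x, h4.tendsto_sum_nat⟩

end Aux

theorem stmt16 [TopologicalSpace.SeparableSpace H] (hinf : ¬ FiniteDimensional ℂ H) :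
    ∃ T : H →L[ℂ] H, ¬ IsCompactOperator ⇑T ∧ StronglyIrreducible T ∧
      ∃ e : HilbertBasis ℕ ℂ H,
        IsUnconditionalSchauderBasis (fun n => T (e n)) := by
  obtain ⟨b⟩ := exists_hb hinf
  refine ⟨Tb b, Tb_not_compact b, Tb_strongly_irreducible b, b, ?_⟩
  exact ⟨(Tb_schauder b).1, (Tb_schauder b).2⟩
end
end
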